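/- Let the n-th cumulant of the negative binomial distribution with parameters r and λ be η(n) = ∑_{m=1}^{n} r·(m-1)!·S(n,m)·λ^m (where S(n,m) are Stirling numbers of the second kind), and let the n-th cumulant of the matched shifted-gamma distribution be γ(1) = rλ and γ(n) = (n-1)!·r·λ(1+λ)(1/2+λ)^{n-2} for n > 1. Define scaled cumulants γ̄(n) = (2^n/r)γ(n) and η̄(n) = (2^n/r)η(n). Then for all n ≥ 0, η̄(n+1) = ∑_{i=0}^{n} Θ(n,i)·γ̄(i+1) and γ̄(n+1) = ∑_{i=0}^{n} θ(n,i)·η̄(i+1), as identities of polynomials in λ, where Θ(n,i) and θ(n,i) are the tanh and arctanh numbers defined by (1/i!)tanh(u)^i = ∑_n Θ(n,i)u^n/n! and (1/i!)arctanh(u)^i = ∑_n θ(n,i)u^n/n!. -/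

import Mathlib

open PowerSeries Finset

/-- Unsigned Lah numbers: `L(n,m) = (n!/m!) * C(n-1,m-1)` for `n ≥ m ≥ 1`, else `0`. -/
noncomputable def lahN (n m : ℕ) : ℚ :=
  if 1 ≤ m ∧ m ≤ n then (n.factorial : ℚ) / (m.factorial : ℚ) * ((n - 1).choose (m - 1) : ℚ)
  else 0

/-- Unsigned Stirling numbers of the first kind (permutations of `n` with `m` cycles). -/
def stirling1 : ℕ → ℕ → ℕ
  | 0, 0 => 1
  | 0, _ + 1 => 0
  | _ + 1, 0 => 0
  | n + 1, m + 1 => n * stirling1 n (m + 1) + stirling1 n m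

/-- Stirling numbers of the second kind. -/
def stirling2 : ℕ → ℕ → ℕ
  | 0, 0 => 1
  | 0, _ + 1 => 0
  | _ + 1, 0 => 0
  | n + 1, m + 1 => (m + 1) * stirling2 n (m + 1) + stirling2 n m

/-- `tanh` as a formal power series over `ℚ`: `(e^u - e^{-u}) / (e^u + e^{-u})`. -/
noncomputable def tanhS : PowerSeries ℚ :=
  (PowerSeries.exp ℚ - PowerSeries.rescale (-1) (PowerSeries.exp ℚ)) *
    (PowerSeries.exp ℚ + PowerSeries.rescale (-1) (PowerSeries.exp ℚ))⁻¹

/-- `arctanh u = (1/2) log((1+u)/(1-u)) = ∑_{j≥0} u^{2j+1}/(2j+1)` as a formal power series. -/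
noncomputable def arctanhS : PowerSeries ℚ :=
  PowerSeries.mk fun n => if n % 2 = 1 then (1 : ℚ) / n else 0

/-- Tanh numbers `Θ(n,m)`, defined by `(1/m!) tanh(u)^m = ∑_n Θ(n,m) u^n/n!`. -/
noncomputable def ThetaT (n m : ℕ) : ℚ :=
  (n.factorial : ℚ) / (m.factorial : ℚ) * PowerSeries.coeff n (tanhS ^ m)

/-- Arctanh numbers `θ(n,m)`, defined by `(1/m!) arctanh(u)^m = ∑_n θ(n,m) u^n/n!`. -/
noncomputable def thetaA (n m : ℕ) : ℚ :=
  (n.factorial : ℚ) / (m.factorial : ℚ) * PowerSeries.coeff n (arctanhS ^ m)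

/-- The n-th cumulant of the negative binomial distribution with parameters r, λ,
as a polynomial in λ: η(n) = ∑_{m=1}^{n} r (m-1)! S(n,m) λ^m. -/
noncomputable def etaCum (r : ℚ) (n : ℕ) : Polynomial ℚ :=
  ∑ m ∈ Finset.Icc 1 n,
    Polynomial.C (r * ((m - 1).factorial : ℚ) * (stirling2 n m : ℚ)) * Polynomial.X ^ m

/-- The n-th cumulant of the matched shifted-gamma distribution, as a polynomial in λ:
γ(1) = rλ and γ(n) = (n-1)! r λ(1+λ)(1/2+λ)^{n-2} for n > 1. -/
noncomputable def gammaCum (r : ℚ) (n : ℕ) : Polynomial ℚ :=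
  if n = 1 then Polynomial.C r * Polynomial.X
  else
    Polynomial.C (((n - 1).factorial : ℚ) * r) * Polynomial.X * (1 + Polynomial.X) *
      (Polynomial.C (1 / 2) + Polynomial.X) ^ (n - 2)

/-- Scaled cumulant η̄(n) = (2^n/r) η(n). -/
noncomputable def etaBar (r : ℚ) (n : ℕ) : Polynomial ℚ :=
  Polynomial.C ((2 : ℚ) ^ n / r) * etaCum r n

/-- Scaled cumulant γ̄(n) = (2^n/r) γ(n). -/
noncomputable def gammaBar (r : ℚ) (n : ℕ) : Polynomial ℚ :=
  Polynomial.C ((2 : ℚ) ^ n / r) * gammaCum r n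

lemma stirling2_zero_right : ∀ n, stirling2 n 0 = if n = 0 then 1 else 0
  | 0 => rfl
  | _ + 1 => rfl

lemma stirling2_eq_zero_of_lt : ∀ {n m}, n < m → stirling2 n m = 0
  | 0, _ + 1, _ => rfl
  | n + 1, m + 1, h => by
    have h' : n < m := Nat.lt_of_succ_lt_succ h
    rw [stirling2, stirling2_eq_zero_of_lt h', stirling2_eq_zero_of_lt (h'.trans (Nat.lt_succ_self m))]
    ring

lemma stirling2_one : ∀ n, stirling2 (n + 1) 1 = 1
  | 0 => rfl
  | n + 1 => by
    show 1 * stirling2 (n + 1) 1 + stirling2 (n + 1) 0 = 1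
    rw [stirling2_one n, stirling2_zero_right]; simp

/-- Lemma D -/
lemma sum_choose_stirling2 : ∀ (n j : ℕ),
    ∑ k ∈ range (n + 1), n.choose k * stirling2 k j = stirling2 (n + 1) (j + 1)
  | 0, j => by
    cases j <;> simp [stirling2, stirling2_zero_right]
  | n + 1, j => by
    rw [Finset.sum_range_succ' (fun k => (n+1).choose k * stirling2 k j)]
    have split : ∀ k, (n+1).choose (k+1) * stirling2 (k+1) j
        = n.choose k * stirling2 (k+1) j + n.choose (k+1) * stirling2 (k+1) j := by
      intro k; rw [Nat.choose_succ_succ, add_mul]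
    simp only [split]
    rw [Finset.sum_add_distrib]
    have h2 : (∑ k ∈ range (n + 1), n.choose (k+1) * stirling2 (k+1) j)
        + (n+1).choose 0 * stirling2 0 j = stirling2 (n + 1) (j + 1) := by
      rw [← sum_choose_stirling2 n j, Finset.sum_range_succ' (fun k => n.choose k * stirling2 k j),
        Finset.sum_range_succ]
      simp [Nat.choose_eq_zero_of_lt (Nat.lt_succ_self n)]
    rw [add_right_comm, add_assoc, add_comm ((n+1).choose 0 * stirling2 0 j), h2]
    cases j with
    | zero =>
      have h1 : (∑ k ∈ range (n + 1), n.choose k * stirling2 (k+1) 0) = 0 := by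
        apply Finset.sum_eq_zero; intro k _; simp [stirling2_zero_right]
      rw [h1, zero_add]
      show _ = 1 * stirling2 (n+1) 1 + stirling2 (n+1) 0
      rw [stirling2_zero_right]; simp
    | succ j' =>
      have h1 : (∑ k ∈ range (n + 1), n.choose k * stirling2 (k+1) (j'+1))
          = (j'+1) * stirling2 (n+1) (j'+2) + stirling2 (n+1) (j'+1) := by
        have e : ∀ k, n.choose k * stirling2 (k+1) (j'+1)
            = (j'+1) * (n.choose k * stirling2 k (j'+1)) + n.choose k * stirling2 k j' := by
          intro k; show n.choose k * ((j'+1) * stirling2 k (j'+1) + stirling2 k j') = _; ring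
        simp only [e]
        rw [Finset.sum_add_distrib, ← Finset.mul_sum, sum_choose_stirling2 n (j'+1),
          sum_choose_stirling2 n j']
      rw [h1]
      show _ = (j'+2) * stirling2 (n+1) (j'+2) + stirling2 (n+1) (j'+1)
      ring

variable {R : Type*} [CommRing R]

lemma coeff_pow_eq_zero {a : PowerSeries R} (ha : constantCoeff a = 0)
    {n i : ℕ} (h : n < i) : coeff n (a ^ i) = 0 := by
  have hd : (X : PowerSeries R) ^ i ∣ a ^ i := pow_dvd_pow_of_dvd (X_dvd_iff.mpr ha) i
  exact X_pow_dvd_iff.mp hd n h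

/-- Composition of `f` with `a` (constant term of `a` must be 0 for good behavior). -/
noncomputable def compS (a f : PowerSeries R) : PowerSeries R :=
  PowerSeries.mk fun n => ∑ i ∈ range (n + 1), coeff i f * coeff n (a ^ i)

lemma coeff_compS (a f : PowerSeries R) (n : ℕ) :
    coeff n (compS a f) = ∑ i ∈ range (n + 1), coeff i f * coeff n (a ^ i) :=
  coeff_mk _ _

lemma coeff_eval₂ (a : PowerSeries R) (ha : constantCoeff a = 0) (P : Polynomial R) (n : ℕ) :
    coeff n (Polynomial.eval₂ (C) a P) = ∑ i ∈ range (n + 1), P.coeff i * coeff n (a ^ i) := by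
  rw [Polynomial.eval₂_eq_sum_range' (C) (Nat.lt_succ_of_le (le_max_right n P.natDegree)) a]
  rw [map_sum]
  have : ∀ i, coeff n (C (P.coeff i) * a ^ i) = P.coeff i * coeff n (a ^ i) := fun i =>
    coeff_C_mul _ _ _
  simp only [this]
  apply (Finset.sum_subset _ _).symm
  · exact Finset.range_subset_range.mpr (Nat.succ_le_succ (le_max_left n P.natDegree))
  · intro i _ hi
    rw [coeff_pow_eq_zero ha (by simpa using hi), mul_zero]

lemma coeff_compS_eq_trunc (a f : PowerSeries R) (ha : constantCoeff a = 0)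
    {n N : ℕ} (h : n < N) :
    coeff n (compS a f) = coeff n (Polynomial.eval₂ (C) a (trunc N f)) := by
  rw [coeff_eval₂ a ha, coeff_compS]
  apply Finset.sum_congr rfl
  intro i hi
  rw [coeff_trunc]
  rw [if_pos (lt_of_lt_of_le (Finset.mem_range.mp hi) h)]

lemma compS_add (a f g : PowerSeries R) : compS a (f + g) = compS a f + compS a g := by
  ext n
  simp only [map_add, coeff_compS, ← Finset.sum_add_distrib, add_mul]

lemma compS_one (a : PowerSeries R) : compS a 1 = 1 := by
  ext n
  rw [coeff_compS]
  rw [Finset.sum_eq_single 0]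
  · simp
  · intro i _ hi
    rw [coeff_one, if_neg hi, zero_mul]
  · simp
lemma compS_C (a : PowerSeries R) (r : R) : compS a (C r) = C r := by
  ext n
  rw [coeff_compS, Finset.sum_eq_single 0]
  · simp [coeff_C]
  · intro i _ hi; simp [coeff_C, if_neg hi]
  · simp

lemma compS_X (a : PowerSeries R) (ha : constantCoeff a = 0) : compS a X = a := by
  ext n
  rw [coeff_compS, Finset.sum_eq_single 1]
  · simp
  · intro i _ hi; simp [coeff_X, if_neg hi]
  · intro h
    have : n = 0 := by simpa using h
    subst this
    simp [ha, coeff_zero_eq_constantCoeff]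

lemma compS_mul (a f g : PowerSeries R) (ha : constantCoeff a = 0) :
    compS a (f * g) = compS a f * compS a g := by
  ext n
  set N := n + 1 with hN
  have hn : n < N := Nat.lt_succ_self n
  rw [coeff_compS_eq_trunc a (f * g) ha hn]
  -- eval₂ of trunc N (f*g) vs trunc N f * trunc N g agree at coeff n
  have key : coeff n (Polynomial.eval₂ (C) a (trunc N (f * g)))
      = coeff n (Polynomial.eval₂ (C) a (trunc N f * trunc N g)) := by
    rw [coeff_eval₂ a ha, coeff_eval₂ a ha]
    apply Finset.sum_congr rfl
    intro i hi
    congr 1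
    have hiN : i < N := lt_of_lt_of_le (Finset.mem_range.mp hi) (le_refl N)
    rw [coeff_trunc, if_pos hiN, Polynomial.coeff_mul, coeff_mul]
    apply Finset.sum_congr rfl
    intro pq hpq
    have hp : pq.1 < N := lt_of_le_of_lt (Finset.HasAntidiagonal.antidiagonal.fst_le hpq) hiN
    have hq : pq.2 < N := lt_of_le_of_lt (Finset.HasAntidiagonal.antidiagonal.snd_le hpq) hiN
    rw [coeff_trunc, if_pos hp, coeff_trunc, if_pos hq]
  rw [key, Polynomial.eval₂_mul, coeff_mul, coeff_mul]
  apply Finset.sum_congr rfl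
  intro pq hpq
  have hp : pq.1 < N := Nat.lt_succ_of_le (Finset.HasAntidiagonal.antidiagonal.fst_le hpq)
  have hq : pq.2 < N := Nat.lt_succ_of_le (Finset.HasAntidiagonal.antidiagonal.snd_le hpq)
  rw [← coeff_compS_eq_trunc a f ha hp, ← coeff_compS_eq_trunc a g ha hq]

lemma compS_pow (a f : PowerSeries R) (ha : constantCoeff a = 0) (j : ℕ) :
    compS a (f ^ j) = compS a f ^ j := by
  induction j with
  | zero => simpa using compS_one a
  | succ j ih => rw [pow_succ, pow_succ, compS_mul _ _ _ ha, ih]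

lemma compS_sub (a f g : PowerSeries R) : compS a (f - g) = compS a f - compS a g := by
  ext n
  simp only [map_sub, coeff_compS, ← Finset.sum_sub_distrib, sub_mul]

lemma compS_map {S : Type*} [CommRing S] (φ : R →+* S) (a f : PowerSeries R) :
    compS (map φ a) (map φ f) = map φ (compS a f) := by
  ext n
  rw [coeff_compS, coeff_map, coeff_compS, map_sum]
  apply Finset.sum_congr rfl
  intro i _
  rw [coeff_map, ← map_pow, coeff_map, map_mul]

lemma derivative_compS (a f : PowerSeries R) (ha : constantCoeff a = 0) :
    d⁄dX R (compS a f) = compS a (d⁄dX R f) * d⁄dX R a := by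
  ext n
  rw [coeff_derivative, coeff_compS]
  have step1 : (∑ i ∈ range (n + 1 + 1), coeff i f * coeff (n+1) (a ^ i)) * (n + 1 : R)
      = ∑ i ∈ range (n + 1), coeff (i+1) f * coeff n (a ^ i * d⁄dX R a) * (i + 1 : R) := by
    rw [Finset.sum_mul, Finset.sum_range_succ']
    have h0 : coeff 0 f * coeff (n+1) (a ^ 0) * (n+1 : R) = 0 := by
      simp [coeff_one]
    rw [h0, add_zero]
    apply Finset.sum_congr rfl
    intro i _
    have hder : coeff (n+1) (a^(i+1)) * (n+1 : R) = coeff n (d⁄dX R (a^(i+1))) := by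
      rw [coeff_derivative]
    have hpow : d⁄dX R (a^(i+1)) = ((i+1 : ℕ)) • (a ^ i * d⁄dX R a) := by
      rw [Derivation.leibniz_pow]
      simp [smul_eq_mul, mul_comm]
    rw [mul_assoc, hder, hpow, map_nsmul]
    push_cast
    ring
  rw [step1, coeff_mul]
  have step2 : ∀ pq ∈ Finset.HasAntidiagonal.antidiagonal n,
      coeff pq.1 (compS a (d⁄dX R f)) * coeff pq.2 (d⁄dX R a)
      = ∑ i ∈ range (n+1), coeff (i+1) f * ((i+1 : R) * (coeff pq.1 (a^i) * coeff pq.2 (d⁄dX R a))) := by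
    intro pq hpq
    have hp : pq.1 ≤ n := Finset.HasAntidiagonal.antidiagonal.fst_le hpq
    rw [coeff_compS]
    have ext1 : ∑ i ∈ range (pq.1 + 1), coeff i (d⁄dX R f) * coeff pq.1 (a ^ i)
        = ∑ i ∈ range (n + 1), coeff i (d⁄dX R f) * coeff pq.1 (a ^ i) := by
      apply Finset.sum_subset
      · exact Finset.range_subset_range.mpr (Nat.succ_le_succ hp)
      · intro i _ hi
        rw [coeff_pow_eq_zero ha (Nat.lt_of_succ_le (by simpa using hi)), mul_zero]
    rw [ext1, Finset.sum_mul]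
    apply Finset.sum_congr rfl
    intro i _
    rw [coeff_derivative]
    ring
  rw [Finset.sum_congr rfl step2, Finset.sum_comm]
  apply Finset.sum_congr rfl
  intro i _
  rw [← Finset.mul_sum, ← Finset.mul_sum, ← coeff_mul]; ring

noncomputable def E2 : PowerSeries ℚ := rescale (2 : ℚ) (PowerSeries.exp ℚ)

lemma constCoeff_E2 : constantCoeff E2 = 1 := by
  rw [E2, ← coeff_zero_eq_constantCoeff, coeff_rescale]
  simp [coeff_exp]

lemma coeff_E2 (n : ℕ) : coeff n E2 = 2 ^ n / n.factorial := by
  rw [E2, coeff_rescale, coeff_exp]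
  simp [div_eq_mul_inv, one_div]

lemma constCoeff_sum_exp :
    constantCoeff (PowerSeries.exp ℚ + PowerSeries.rescale (-1) (PowerSeries.exp ℚ)) = 2 := by
  rw [map_add, constantCoeff_exp, ← coeff_zero_eq_constantCoeff, coeff_rescale]
  simp [coeff_exp]; norm_num

lemma constCoeff_tanhS : constantCoeff tanhS = 0 := by
  rw [tanhS, map_mul, map_sub, constantCoeff_exp, ← coeff_zero_eq_constantCoeff, coeff_rescale]
  simp [coeff_exp]

lemma constCoeff_arctanhS : constantCoeff arctanhS = 0 := by
  rw [arctanhS, ← coeff_zero_eq_constantCoeff, coeff_mk]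
  norm_num

lemma tanh_rel : tanhS * (1 + E2) = E2 - 1 := by
  set E1 := PowerSeries.exp ℚ
  set Em := PowerSeries.rescale (-1) (PowerSeries.exp ℚ)
  have t_mul : tanhS * (E1 + Em) = E1 - Em := by
    rw [tanhS, mul_assoc, PowerSeries.inv_mul_cancel _ (by rw [constCoeff_sum_exp]; norm_num),
      mul_one]
  have hEE : E1 * E1 = E2 := by
    have := PowerSeries.exp_mul_exp_eq_exp_add (1 : ℚ) 1
    rw [rescale_one] at this
    have e : (1 + 1 : ℚ) = 2 := by norm_num
    rw [e] at this
    exact this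
  have hEm : E1 * Em = 1 := by
    have := PowerSeries.exp_mul_exp_eq_exp_add (1 : ℚ) (-1)
    rw [rescale_one] at this
    simp only [RingHom.id_apply, add_neg_cancel, rescale_zero] at this
    simpa [constantCoeff_exp] using this
  have expand : (1 + E2) = (E1 + Em) * E1 := by
    rw [add_mul, hEE, mul_comm Em E1, hEm]; ring
  rw [expand, ← mul_assoc, t_mul, sub_mul, hEE, mul_comm Em E1, hEm]

lemma coeff_mul_X {R : Type*} [CommRing R] (f : PowerSeries R) (n : ℕ) :
    coeff n (f * X) = if 1 ≤ n then coeff (n - 1) f else 0 := by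
  rw [← pow_one (X : PowerSeries R), coeff_mul_X_pow']

lemma coeff_deriv_arctanh (m : ℕ) :
    coeff m (d⁄dX ℚ arctanhS) = if m % 2 = 0 then 1 else 0 := by
  rw [coeff_derivative, arctanhS, coeff_mk]
  rcases Nat.even_or_odd m with he | ho
  · have h0 : m % 2 = 0 := Nat.even_iff.mp he
    have h1 : (m + 1) % 2 = 1 := by omega
    rw [if_pos h1, if_pos h0, one_div, Nat.cast_add, Nat.cast_one,
      inv_mul_cancel₀ (by positivity)]
  · have h0 : m % 2 ≠ 0 := by have := Nat.odd_iff.mp ho; omega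
    have h1 : (m + 1) % 2 ≠ 1 := by have := Nat.odd_iff.mp ho; omega
    rw [if_neg h1, if_neg h0, zero_mul]

lemma dArctanh : d⁄dX ℚ arctanhS * (1 - X ^ 2) = 1 := by
  ext n
  rw [mul_sub, mul_one, map_sub, coeff_deriv_arctanh, coeff_mul_X_pow', coeff_one]
  rcases lt_or_ge n 2 with h2 | h2
  · interval_cases n <;> norm_num
  · rw [if_pos h2, coeff_deriv_arctanh]
    have e : (n - 2) % 2 = n % 2 := by omega
    have hn : n ≠ 0 := by omega
    rw [e]
    split_ifs <;> simp [hn]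

noncomputable def Wc : PowerSeries ℚ := PowerSeries.mk fun n => if n = 0 then (1 : ℚ) else 2

lemma coeff_Wc (m : ℕ) : coeff m Wc = if m = 0 then (1:ℚ) else 2 := coeff_mk _ _

lemma two_eq_C : (2 : PowerSeries ℚ) = C (2 : ℚ) := by
  rw [map_ofNat]

lemma Wc_mul_one_sub_X : (1 + Wc) * (1 - X) = 2 := by
  ext n
  rw [mul_sub, mul_one, map_sub, coeff_mul_X, map_add, map_add, coeff_one, coeff_one,
    coeff_Wc, coeff_Wc, two_eq_C, coeff_C]
  rcases n with _ | n
  · norm_num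
  · rcases n with _ | n <;> norm_num

lemma Wc_sub_one_mul : (Wc - 1) * (1 - X) = 2 * X := by
  ext n
  rw [mul_sub, mul_one, map_sub, coeff_mul_X, map_sub, map_sub, coeff_one, coeff_one,
    coeff_Wc, coeff_Wc, two_eq_C, coeff_C_mul, coeff_X]
  rcases n with _ | n
  · norm_num
  · rcases n with _ | n <;> norm_num

lemma dWc : d⁄dX ℚ Wc * (1 - X ^ 2) = 2 * Wc := by
  ext n
  have hd : ∀ m : ℕ, coeff m (d⁄dX ℚ Wc) = 2 * (m + 1) := by
    intro m
    rw [coeff_derivative, coeff_Wc, if_neg (Nat.succ_ne_zero m)]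
  rw [mul_sub, mul_one, map_sub, hd, coeff_mul_X_pow', two_eq_C, coeff_C_mul, coeff_Wc]
  rcases lt_or_ge n 2 with h2 | h2
  · interval_cases n <;> norm_num
  · rw [if_pos h2, hd, if_neg (by omega : n ≠ 0)]
    have : ((n - 2 : ℕ) : ℚ) = (n : ℚ) - 2 := by
      have : (2:ℕ) ≤ n := h2
      push_cast [this]; ring
    rw [this]; ring

lemma ode_unique (W₁ W₂ : PowerSeries ℚ)
    (h₁ : d⁄dX ℚ W₁ * (1 - X ^ 2) = 2 * W₁) (h₂ : d⁄dX ℚ W₂ * (1 - X ^ 2) = 2 * W₂)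
    (h0 : coeff 0 W₁ = coeff 0 W₂) : W₁ = W₂ := by
  ext n
  induction n using Nat.strong_induction_on with
  | _ n ih =>
    rcases n with _ | n
    · exact h0
    · have key : ∀ W : PowerSeries ℚ, d⁄dX ℚ W * (1 - X ^ 2) = 2 * W →
          (n + 1 : ℚ) * coeff (n+1) W
          = 2 * coeff n W + (if 2 ≤ n then ((n:ℚ) - 1) * coeff (n-1) W else 0) := by
        intro W hW
        have := congrArg (coeff n) hW
        rw [mul_sub, mul_one, map_sub, coeff_mul_X_pow', coeff_derivative, two_eq_C,
          coeff_C_mul] at this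
        rcases lt_or_ge n 2 with h2 | h2
        · rw [if_neg (by omega), sub_zero] at this
          rw [if_neg (by omega)]
          rw [← this]; ring
        · rw [if_pos h2, coeff_derivative] at this
          rw [if_pos h2]
          have e : (n - 2 + 1) = n - 1 := by omega
          rw [e] at this
          have e2 : ((n - 2 : ℕ) : ℚ) + 1 = (n : ℚ) - 1 := by
            have : (2:ℕ) ≤ n := h2; push_cast [this]; ring
          rw [e2] at this
          linarith [this]
      have k1 := key W₁ h₁
      have k2 := key W₂ h₂
      rw [ih n (by omega)] at k1
      have e3 : (if 2 ≤ n then ((n:ℚ) - 1) * coeff (n-1) W₁ else 0)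
          = (if 2 ≤ n then ((n:ℚ) - 1) * coeff (n-1) W₂ else 0) := by
        split_ifs with h
        · rw [ih (n-1) (by omega)]
        · rfl
      rw [e3, ← k2] at k1
      have hne : (n + 1 : ℚ) ≠ 0 := by positivity
      exact mul_left_cancel₀ hne k1


section QSide

lemma dE2 : d⁄dX ℚ E2 = 2 * E2 := by
  ext n
  rw [coeff_derivative, coeff_E2, two_eq_C, coeff_C_mul, coeff_E2]
  rw [Nat.factorial_succ]
  push_cast
  have h1 : ((n.factorial : ℚ)) ≠ 0 := Nat.cast_ne_zero.mpr n.factorial_ne_zero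
  have h2 : ((n:ℚ) + 1) ≠ 0 := by positivity
  field_simp
  ring

lemma comp_exp : compS arctanhS E2 = Wc := by
  apply ode_unique
  · have hch := derivative_compS arctanhS E2 constCoeff_arctanhS
    rw [dE2] at hch
    have h2 : compS arctanhS (2 * E2) = 2 * compS arctanhS E2 := by
      rw [two_eq_C, compS_mul _ _ _ constCoeff_arctanhS, compS_C, ← two_eq_C]
    rw [h2] at hch
    rw [hch]
    have : 2 * compS arctanhS E2 * d⁄dX ℚ arctanhS * (1 - X ^ 2)
        = 2 * compS arctanhS E2 * (d⁄dX ℚ arctanhS * (1 - X ^ 2)) := by ring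
    rw [this, dArctanh, mul_one]
  · exact dWc
  · have hE0 : coeff 0 E2 = 1 := by rw [coeff_E2]; norm_num
    simp [coeff_compS, coeff_Wc, hE0]

lemma comp_tanh : compS arctanhS tanhS = X := by
  have h := congrArg (compS arctanhS) tanh_rel
  rw [compS_mul _ _ _ constCoeff_arctanhS, compS_add, compS_sub, compS_one, comp_exp] at h
  have h2 := congrArg (· * (1 - X : PowerSeries ℚ)) h
  rw [mul_assoc, Wc_mul_one_sub_X, Wc_sub_one_mul] at h2
  have h3 : (2 : PowerSeries ℚ) * compS arctanhS tanhS = 2 * X := by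
    rw [← h2]; ring
  have h4 : (2 : PowerSeries ℚ) ≠ 0 := by
    intro hh
    have := congrArg (coeff 0) hh
    rw [two_eq_C, coeff_C] at this
    norm_num at this
  exact mul_left_cancel₀ h4 h3

end QSide

section KSide

local notation "K" => Polynomial ℚ
noncomputable abbrev PCq : ℚ →+* K := Polynomial.C
noncomputable def TK : PowerSeries K := PowerSeries.map PCq tanhS
noncomputable def AK : PowerSeries K := PowerSeries.map PCq arctanhS
noncomputable def E2K : PowerSeries K := PowerSeries.map PCq E2
local notation "CK" => PowerSeries.C (R := K)

lemma constCoeff_TK : constantCoeff TK = 0 := by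
  rw [TK, ← coeff_zero_eq_constantCoeff, coeff_map, coeff_zero_eq_constantCoeff,
    constCoeff_tanhS, map_zero]

lemma constCoeff_AK : constantCoeff AK = 0 := by
  rw [AK, ← coeff_zero_eq_constantCoeff, coeff_map, coeff_zero_eq_constantCoeff,
    constCoeff_arctanhS, map_zero]

lemma coeff_E2K (q : ℕ) : coeff q E2K = Polynomial.C ((2:ℚ) ^ q / q.factorial) := by
  rw [E2K, coeff_map, coeff_E2]

lemma tanh_relK : TK * (1 + E2K) = E2K - 1 := by
  have := congrArg (PowerSeries.map PCq) tanh_rel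
  rw [map_mul, map_add, map_one, map_sub, map_one] at this
  exact this

lemma comp_tanhK : compS AK TK = X := by
  rw [TK, AK, compS_map, comp_tanh, map_X]

/-- eta polynomial without r and scaling -/
noncomputable def etaP (n : ℕ) : K :=
  ∑ m ∈ Finset.Icc 1 n, Polynomial.C (((m-1).factorial : ℚ) * stirling2 n m) * Polynomial.X ^ m

lemma coeff_etaP (n m : ℕ) :
    (etaP n).coeff m = if m = 0 then 0 else ((m-1).factorial : ℚ) * stirling2 n m := by
  rw [etaP, Polynomial.finset_sum_coeff]
  have : ∀ m' ∈ Finset.Icc 1 n,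
      (Polynomial.C (((m'-1).factorial : ℚ) * stirling2 n m') * Polynomial.X ^ m').coeff m
      = if m = m' then (((m'-1).factorial : ℚ) * stirling2 n m') else 0 := by
    intro m' _
    rw [Polynomial.coeff_C_mul, Polynomial.coeff_X_pow]
    split_ifs with h1
    · rw [mul_one]
    · rw [mul_zero]
  rw [Finset.sum_congr rfl this]
  have := Finset.sum_ite_eq (Finset.Icc 1 n) m
      (fun m' => (((m'-1).factorial : ℚ) * stirling2 n m'))
  rw [this]
  by_cases hm : m ∈ Finset.Icc 1 n
  · rw [if_pos hm, if_neg (by simp at hm; omega)]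
  · rw [if_neg hm]
    simp only [Finset.mem_Icc] at hm
    rcases Nat.eq_zero_or_pos m with rfl | hpos
    · simp
    · rw [if_neg (by omega)]
      have : n < m := by omega
      rw [stirling2_eq_zero_of_lt this]
      simp

/-- ℕ-level key identity -/
lemma sum_choose_stirling2_succ (n j : ℕ) :
    ∑ k ∈ Finset.range (n + 1), n.choose k * stirling2 (k+1) (j+1)
    = (j+1) * stirling2 (n+1) (j+2) + stirling2 (n+1) (j+1) := by
  have e : ∀ k, n.choose k * stirling2 (k+1) (j+1)
      = (j+1) * (n.choose k * stirling2 k (j+1)) + n.choose k * stirling2 k j := by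
    intro k
    show n.choose k * ((j+1) * stirling2 k (j+1) + stirling2 k j) = _
    ring
  simp only [e]
  rw [Finset.sum_add_distrib, ← Finset.mul_sum, sum_choose_stirling2 n (j+1),
    sum_choose_stirling2 n j]

/-- Lemma C: the key polynomial recurrence -/
lemma etaP_rec (n : ℕ) :
    (1 + Polynomial.X) * etaP (n+1)
    = Polynomial.X + Polynomial.X *
        ∑ k ∈ Finset.range (n+1), Polynomial.C ((n.choose k : ℚ)) * etaP (k+1) := by
  ext m
  rw [add_mul, one_mul]
  rcases m with _ | m
  · rw [Polynomial.coeff_add, Polynomial.coeff_add, Polynomial.mul_coeff_zero,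
      Polynomial.coeff_X_zero, Polynomial.mul_coeff_zero, Polynomial.coeff_X_zero,
      coeff_etaP, if_pos rfl]
    ring
  · rw [Polynomial.coeff_add, Polynomial.coeff_add, Polynomial.coeff_X_mul,
      Polynomial.coeff_X_mul, Polynomial.finset_sum_coeff]
    simp only [Polynomial.coeff_C_mul]
    rcases m with _ | j
    · have hz : (∑ k ∈ Finset.range (n+1), (n.choose k : ℚ) * (etaP (k+1)).coeff 0) = 0 := by
        apply Finset.sum_eq_zero
        intro k _
        rw [coeff_etaP, if_pos rfl, mul_zero]
      rw [hz, coeff_etaP, coeff_etaP, Polynomial.coeff_X_one]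
      norm_num [stirling2_one]
    · have hterm : ∀ k ∈ Finset.range (n+1), (n.choose k:ℚ) * (etaP (k+1)).coeff (j+1)
          = (j.factorial : ℚ) * ((n.choose k * stirling2 (k+1) (j+1) : ℕ) : ℚ) := by
        intro k _
        rw [coeff_etaP, if_neg (Nat.succ_ne_zero j), Nat.add_sub_cancel]
        push_cast
        ring
      rw [Finset.sum_congr rfl hterm, ← Finset.mul_sum, ← Nat.cast_sum,
        sum_choose_stirling2_succ n j]
      rw [coeff_etaP, coeff_etaP, Polynomial.coeff_X]
      rw [if_neg (by omega), if_neg (by omega), if_neg (by omega)]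
      have e1 : j + 1 + 1 - 1 = j + 1 := rfl
      have e2 : j + 1 - 1 = j := rfl
      rw [e1, e2]
      push_cast [Nat.factorial_succ]
      ring

noncomputable def Hser : PowerSeries K :=
  PowerSeries.mk fun n => Polynomial.C ((2:ℚ)^(n+1) / n.factorial) * etaP (n+1)

lemma Hser_eq1 : Hser * (CK (1 + Polynomial.X) - CK Polynomial.X * E2K)
    = CK (2 * Polynomial.X) * E2K := by
  refine PowerSeries.ext fun n => ?_
  rw [mul_sub]
  have re : Hser * (CK Polynomial.X * E2K) = CK Polynomial.X * (Hser * E2K) := by ring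
  rw [map_sub, coeff_mul_C, re, coeff_C_mul, coeff_C_mul, coeff_mul]
  simp only [Hser, coeff_mk, coeff_E2K]
  rw [Finset.Nat.sum_antidiagonal_eq_sum_range_succ_mk]
  have term : ∀ k ∈ Finset.range (n+1),
      Polynomial.C ((2:ℚ)^(k+1) / k.factorial) * etaP (k+1) * Polynomial.C ((2:ℚ)^(n-k) / (n-k).factorial)
      = Polynomial.C ((2:ℚ)^(n+1) / n.factorial) * (Polynomial.C ((n.choose k : ℚ)) * etaP (k+1)) := by
    intro k hk
    have hkn : k ≤ n := Nat.lt_succ_iff.mp (Finset.mem_range.mp hk)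
    have hc : ((n.choose k : ℚ)) = (n.factorial : ℚ) / (k.factorial * (n-k).factorial) :=
      Nat.cast_choose ℚ hkn
    have hpow : (2:ℚ)^(k+1) * (2:ℚ)^(n-k) = (2:ℚ)^(n+1) := by
      rw [← pow_add]
      congr 1
      omega
    have key : (2:ℚ)^(k+1) / k.factorial * ((2:ℚ)^(n-k) / (n-k).factorial)
        = (2:ℚ)^(n+1) / n.factorial * (n.choose k : ℚ) := by
      have hf : ∀ m : ℕ, ((m.factorial : ℚ)) ≠ 0 :=
        fun m => Nat.cast_ne_zero.mpr m.factorial_ne_zero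
      rw [hc]
      field_simp
      rw [← hpow]
      try ring
    calc Polynomial.C ((2:ℚ)^(k+1) / k.factorial) * etaP (k+1)
          * Polynomial.C ((2:ℚ)^(n-k) / (n-k).factorial)
        = Polynomial.C ((2:ℚ)^(k+1) / k.factorial * ((2:ℚ)^(n-k) / (n-k).factorial)) * etaP (k+1) := by
          rw [Polynomial.C_mul]; ring
      _ = Polynomial.C ((2:ℚ)^(n+1) / n.factorial * (n.choose k : ℚ)) * etaP (k+1) := by rw [key]
      _ = _ := by rw [Polynomial.C_mul]; ring
  rw [Finset.sum_congr rfl term, ← Finset.mul_sum]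
  have factor : Polynomial.C ((2:ℚ)^(n+1) / n.factorial) * etaP (n+1) * (1 + Polynomial.X)
      - Polynomial.X * (Polynomial.C ((2:ℚ)^(n+1) / n.factorial)
          * ∑ k ∈ Finset.range (n+1), Polynomial.C ((n.choose k : ℚ)) * etaP (k+1))
      = Polynomial.C ((2:ℚ)^(n+1) / n.factorial)
          * ((1 + Polynomial.X) * etaP (n+1)
            - Polynomial.X * ∑ k ∈ Finset.range (n+1), Polynomial.C ((n.choose k : ℚ)) * etaP (k+1)) := by
    ring
  rw [factor, etaP_rec]
  have cfac : Polynomial.C ((2:ℚ)^(n+1) / n.factorial)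
      = 2 * Polynomial.C ((2:ℚ)^n / n.factorial) := by
    have : (2:ℚ)^(n+1) / n.factorial = 2 * ((2:ℚ)^n / n.factorial) := by
      rw [pow_succ]; ring
    rw [this, Polynomial.C_mul, map_ofNat]
  rw [cfac]
  ring

noncomputable def Gser : PowerSeries K :=
  PowerSeries.mk fun n => if n = 0 then 2 * Polynomial.X
    else Polynomial.C (4:ℚ) *
      (Polynomial.X * (1 + Polynomial.X) * (1 + 2 * Polynomial.X) ^ (n-1))

noncomputable def cKc : PowerSeries K := CK (1 + 2 * Polynomial.X)

lemma Gser_eq5 : Gser * (1 - cKc * X) = CK (2 * Polynomial.X) * (1 + X) := by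
  refine PowerSeries.ext fun n => ?_
  have re : Gser * (cKc * X) = cKc * (Gser * X) := by ring
  rw [mul_sub, mul_one, map_sub, re, cKc, coeff_C_mul, coeff_mul_X, mul_add, mul_one, map_add,
    coeff_C, coeff_C_mul, coeff_X]
  simp only [Gser, coeff_mk]
  rcases n with _ | n
  · norm_num
  · rcases n with _ | n
    · norm_num
      rw [map_ofNat]
      ring
    · rw [if_neg (show ¬ (n + 1 + 1 = 0) by omega), if_pos (show (1:ℕ) ≤ n + 1 + 1 by omega),
        if_neg (show ¬ (n + 1 + 1 - 1 = 0) by omega), if_neg (show ¬ (n + 1 + 1 = 1) by omega)]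
      show Polynomial.C (4:ℚ) * (Polynomial.X * (1 + Polynomial.X) * (1 + 2 * Polynomial.X) ^ (n+1))
          - (1 + 2 * Polynomial.X) * (Polynomial.C (4:ℚ)
            * (Polynomial.X * (1 + Polynomial.X) * (1 + 2 * Polynomial.X) ^ n))
          = 0 + 2 * Polynomial.X * 0
      rw [pow_succ]
      ring

lemma isUnit2K : IsUnit (2 : K) := by
  have : (2 : K) = Polynomial.C (2:ℚ) := by rw [map_ofNat]
  rw [this]
  exact Polynomial.isUnit_C.mpr (isUnit_iff_ne_zero.mpr two_ne_zero)

lemma unit1 : IsUnit (1 + E2K) := by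
  rw [PowerSeries.isUnit_iff_constantCoeff]
  rw [map_add, map_one, E2K, ← coeff_zero_eq_constantCoeff, coeff_map,
    coeff_zero_eq_constantCoeff, constCoeff_E2, map_one]
  exact (by norm_num : (1:K) + 1 = 2) ▸ isUnit2K

lemma unit2 : IsUnit (1 - cKc * TK) := by
  rw [PowerSeries.isUnit_iff_constantCoeff, map_sub, map_one, map_mul, constCoeff_TK, mul_zero,
    sub_zero]
  exact isUnit_one

lemma unit3 : IsUnit (1 - cKc * (X : PowerSeries K)) := by
  rw [PowerSeries.isUnit_iff_constantCoeff, map_sub, map_one, map_mul, constantCoeff_X, mul_zero,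
    sub_zero]
  exact isUnit_one

lemma key_prod : (1 - cKc * TK) * (1 + E2K)
    = 2 * (CK (1 + Polynomial.X) - CK Polynomial.X * E2K) := by
  have expand : (1 - cKc * TK) * (1 + E2K) = (1 + E2K) - cKc * (TK * (1 + E2K)) := by ring
  rw [expand, tanh_relK]
  have hc : cKc = 1 + 2 * CK Polynomial.X := by
    rw [cKc, map_add, map_one, map_mul, map_ofNat]
  rw [hc]
  have h1 : CK (1 + Polynomial.X) = 1 + CK Polynomial.X := by
    rw [map_add, map_one]
  rw [h1]
  ring

lemma Hser_eq4 : Hser * (1 - cKc * TK) = CK (2 * Polynomial.X) * (1 + TK) := by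
  apply unit1.mul_right_cancel
  rw [mul_assoc, key_prod]
  have lhs : Hser * (2 * (CK (1 + Polynomial.X) - CK Polynomial.X * E2K))
      = 2 * (Hser * (CK (1 + Polynomial.X) - CK Polynomial.X * E2K)) := by ring
  rw [lhs, Hser_eq1]
  have rhs : CK (2 * Polynomial.X) * (1 + TK) * (1 + E2K)
      = CK (2 * Polynomial.X) * (1 + E2K + TK * (1 + E2K)) := by ring
  rw [rhs, tanh_relK]
  ring

lemma compT_Gser : compS TK Gser = Hser := by
  apply unit2.mul_right_cancel
  rw [Hser_eq4]
  have h5 := congrArg (compS TK) Gser_eq5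
  rw [compS_mul _ _ _ constCoeff_TK, compS_sub, compS_one, compS_mul _ _ _ constCoeff_TK,
    compS_X _ constCoeff_TK, compS_mul _ _ _ constCoeff_TK, compS_add, compS_one,
    compS_X _ constCoeff_TK] at h5
  rw [show compS TK cKc = cKc from by rw [cKc]; exact compS_C _ _] at h5
  rw [show compS TK (CK (2 * Polynomial.X)) = CK (2 * Polynomial.X) from compS_C _ _] at h5
  exact h5

lemma compA_Hser : compS AK Hser = Gser := by
  apply unit3.mul_right_cancel
  rw [Gser_eq5]
  have h4 := congrArg (compS AK) Hser_eq4
  rw [compS_mul _ _ _ constCoeff_AK, compS_sub, compS_one, compS_mul _ _ _ constCoeff_AK,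
    compS_mul _ _ _ constCoeff_AK, compS_add, compS_one, comp_tanhK] at h4
  rw [show compS AK cKc = cKc from by rw [cKc]; exact compS_C _ _] at h4
  rw [show compS AK (CK (2 * Polynomial.X)) = CK (2 * Polynomial.X) from compS_C _ _] at h4
  exact h4

lemma etaBar_eq (r : ℚ) (hr : r ≠ 0) (n : ℕ) :
    etaBar r n = Polynomial.C ((2:ℚ)^n) * etaP n := by
  rw [etaBar, etaCum, etaP, Finset.mul_sum, Finset.mul_sum]
  apply Finset.sum_congr rfl
  intro m _
  have h1 : (2:ℚ)^n / r * (r * ((m-1).factorial:ℚ) * (stirling2 n m : ℚ))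
      = (2:ℚ)^n * (((m-1).factorial:ℚ) * (stirling2 n m : ℚ)) := by
    field_simp
  conv_lhs => rw [← mul_assoc, ← Polynomial.C_mul]
  conv_rhs => rw [← mul_assoc, ← Polynomial.C_mul]
  rw [h1]

lemma coeff_Hser (r : ℚ) (hr : r ≠ 0) (n : ℕ) :
    coeff n Hser = Polynomial.C (((n.factorial : ℚ))⁻¹) * etaBar r (n+1) := by
  rw [Hser, coeff_mk, etaBar_eq r hr, ← mul_assoc, ← Polynomial.C_mul]
  congr 2
  rw [div_eq_mul_inv]
  ring

lemma gammaBar_eq (r : ℚ) (hr : r ≠ 0) (i : ℕ) :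
    gammaBar r (i+1) = if i = 0 then 2 * Polynomial.X
      else Polynomial.C (4 * (i.factorial : ℚ)) *
        (Polynomial.X * (1 + Polynomial.X) * (1 + 2 * Polynomial.X) ^ (i-1)) := by
  rcases i with _ | i
  · rw [gammaBar, gammaCum, if_pos rfl, if_pos rfl, ← mul_assoc, ← Polynomial.C_mul]
    rw [show (2:ℚ)^1 / r * r = 2 from by field_simp]
    rw [map_ofNat]
  · rw [gammaBar, gammaCum, if_neg (by omega), if_neg (by omega)]
    have e1 : i + 1 + 1 - 1 = i + 1 := rfl
    have e2 : i + 1 + 1 - 2 = i := rfl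
    have e3 : i + 1 - 1 = i := rfl
    rw [e1, e2, e3]
    have hCC : Polynomial.C (2:ℚ) * (Polynomial.C (1/2:ℚ) + Polynomial.X)
        = 1 + 2 * Polynomial.X := by
      rw [mul_add, ← Polynomial.C_mul]
      norm_num
      rw [map_ofNat]
    have hpow : ((1:K) + 2 * Polynomial.X) ^ i
        = Polynomial.C ((2:ℚ)^i) * (Polynomial.C (1/2 : ℚ) + Polynomial.X) ^ i := by
      rw [← hCC, mul_pow, ← Polynomial.C_pow]
    have hc : Polynomial.C ((2:ℚ)^(i+1+1)/r) * Polynomial.C (((i+1).factorial:ℚ) * r)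
        = Polynomial.C (4 * (((i+1).factorial:ℚ))) * Polynomial.C ((2:ℚ)^i) := by
      rw [← Polynomial.C_mul, ← Polynomial.C_mul]
      congr 1
      have h2 : (2:ℚ)^(i+1+1) = 4 * 2^i := by
        rw [pow_succ, pow_succ]
        ring
      rw [h2]
      field_simp
    calc Polynomial.C ((2:ℚ)^(i+1+1)/r) * (Polynomial.C (((i+1).factorial:ℚ) * r)
            * Polynomial.X * (1 + Polynomial.X) * (Polynomial.C (1/2:ℚ) + Polynomial.X) ^ i)
        = (Polynomial.C ((2:ℚ)^(i+1+1)/r) * Polynomial.C (((i+1).factorial:ℚ) * r))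
            * (Polynomial.X * (1 + Polynomial.X) * (Polynomial.C (1/2:ℚ) + Polynomial.X) ^ i) := by
          ring
      _ = (Polynomial.C (4 * (((i+1).factorial:ℚ))) * Polynomial.C ((2:ℚ)^i))
            * (Polynomial.X * (1 + Polynomial.X) * (Polynomial.C (1/2:ℚ) + Polynomial.X) ^ i) := by
          rw [hc]
      _ = Polynomial.C (4 * (((i+1).factorial:ℚ)))
            * (Polynomial.X * (1 + Polynomial.X)
              * (Polynomial.C ((2:ℚ)^i) * (Polynomial.C (1/2:ℚ) + Polynomial.X) ^ i)) := by
          ring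
      _ = _ := by rw [← hpow]

lemma coeff_Gser (r : ℚ) (hr : r ≠ 0) (i : ℕ) :
    coeff i Gser = Polynomial.C (((i.factorial : ℚ))⁻¹) * gammaBar r (i+1) := by
  rw [Gser, coeff_mk, gammaBar_eq r hr]
  rcases i with _ | i
  · simp
  · have hC : Polynomial.C ((((i+1).factorial:ℚ))⁻¹) * Polynomial.C (4 * (((i+1).factorial:ℚ)))
        = Polynomial.C (4:ℚ) := by
      rw [← Polynomial.C_mul]
      congr 1
      have hf : (((i+1).factorial : ℚ)) ≠ 0 := Nat.cast_ne_zero.mpr (i+1).factorial_ne_zero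
      field_simp
    symm
    calc Polynomial.C ((((i+1).factorial:ℚ))⁻¹) * (Polynomial.C (4 * (((i+1).factorial:ℚ)))
            * (Polynomial.X * (1 + Polynomial.X) * (1 + 2 * Polynomial.X) ^ (i+1-1)))
        = (Polynomial.C ((((i+1).factorial:ℚ))⁻¹) * Polynomial.C (4 * (((i+1).factorial:ℚ))))
            * (Polynomial.X * (1 + Polynomial.X) * (1 + 2 * Polynomial.X) ^ (i+1-1)) := by
          ring
      _ = Polynomial.C (4:ℚ)
            * (Polynomial.X * (1 + Polynomial.X) * (1 + 2 * Polynomial.X) ^ (i+1-1)) := by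
          rw [hC]

end KSide

/-- For a matched pair, the scaled cumulants are related by the reciprocal linear
combinations η̄(n+1) = ∑_{i=0}^{n} Θ(n,i) γ̄(i+1) and γ̄(n+1) = ∑_{i=0}^{n} θ(n,i) η̄(i+1),
as identities of polynomials in λ. -/
theorem cumulants_reciprocal (r : ℚ) (hr : 0 < r) (n : ℕ) :
    etaBar r (n + 1) =
        ∑ i ∈ Finset.range (n + 1), Polynomial.C (ThetaT n i) * gammaBar r (i + 1) ∧
    gammaBar r (n + 1) =
        ∑ i ∈ Finset.range (n + 1), Polynomial.C (thetaA n i) * etaBar r (i + 1) := by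
  have hr0 : r ≠ 0 := ne_of_gt hr
  have hfacn : ((n.factorial : ℚ)) ≠ 0 := Nat.cast_ne_zero.mpr n.factorial_ne_zero
  have hCne : (Polynomial.C (((n.factorial : ℚ))⁻¹) : Polynomial ℚ) ≠ 0 := by
    rw [Ne, Polynomial.C_eq_zero]
    exact inv_ne_zero hfacn
  constructor
  · have hs : coeff n Hser = coeff n (compS TK Gser) := by
      rw [compT_Gser]
    rw [coeff_Hser r hr0, coeff_compS] at hs
    have term : ∀ i ∈ Finset.range (n+1),
        coeff i Gser * coeff n (TK ^ i)
        = Polynomial.C (((n.factorial : ℚ))⁻¹) * (Polynomial.C (ThetaT n i) * gammaBar r (i+1)) := by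
      intro i hi
      have hfaci : ((i.factorial : ℚ)) ≠ 0 := Nat.cast_ne_zero.mpr i.factorial_ne_zero
      have hTK : coeff n (TK ^ i) = Polynomial.C (coeff n (tanhS ^ i)) := by
        rw [TK, ← map_pow, coeff_map]
      rw [coeff_Gser r hr0, hTK, ThetaT]
      calc Polynomial.C (((i.factorial:ℚ))⁻¹) * gammaBar r (i+1)
              * Polynomial.C (coeff n (tanhS ^ i))
          = Polynomial.C (((i.factorial:ℚ))⁻¹ * coeff n (tanhS ^ i)) * gammaBar r (i+1) := by
            rw [Polynomial.C_mul]
            ring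
        _ = Polynomial.C (((n.factorial:ℚ))⁻¹
              * ((n.factorial:ℚ) / (i.factorial:ℚ) * coeff n (tanhS ^ i))) * gammaBar r (i+1) := by
            congr 2
            field_simp
        _ = Polynomial.C (((n.factorial : ℚ))⁻¹)
              * (Polynomial.C ((n.factorial:ℚ) / (i.factorial:ℚ) * coeff n (tanhS ^ i))
                * gammaBar r (i+1)) := by
            rw [Polynomial.C_mul]
            ring
    rw [Finset.sum_congr rfl term, ← Finset.mul_sum] at hs
    exact mul_left_cancel₀ hCne hs
  · have hs : coeff n Gser = coeff n (compS AK Hser) := by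
      rw [compA_Hser]
    rw [coeff_Gser r hr0, coeff_compS] at hs
    have term : ∀ i ∈ Finset.range (n+1),
        coeff i Hser * coeff n (AK ^ i)
        = Polynomial.C (((n.factorial : ℚ))⁻¹) * (Polynomial.C (thetaA n i) * etaBar r (i+1)) := by
      intro i hi
      have hfaci : ((i.factorial : ℚ)) ≠ 0 := Nat.cast_ne_zero.mpr i.factorial_ne_zero
      have hAK : coeff n (AK ^ i) = Polynomial.C (coeff n (arctanhS ^ i)) := by
        rw [AK, ← map_pow, coeff_map]
      rw [coeff_Hser r hr0, hAK, thetaA]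
      calc Polynomial.C (((i.factorial:ℚ))⁻¹) * etaBar r (i+1)
              * Polynomial.C (coeff n (arctanhS ^ i))
          = Polynomial.C (((i.factorial:ℚ))⁻¹ * coeff n (arctanhS ^ i)) * etaBar r (i+1) := by
            rw [Polynomial.C_mul]
            ring
        _ = Polynomial.C (((n.factorial:ℚ))⁻¹
              * ((n.factorial:ℚ) / (i.factorial:ℚ) * coeff n (arctanhS ^ i))) * etaBar r (i+1) := by
            congr 2
            field_simp
        _ = Polynomial.C (((n.factorial : ℚ))⁻¹)
              * (Polynomial.C ((n.factorial:ℚ) / (i.factorial:ℚ) * coeff n (arctanhS ^ i))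
                * etaBar r (i+1)) := by
            rw [Polynomial.C_mul]
            ring
    rw [Finset.sum_congr rfl term, ← Finset.mul_sum] at hs
    exact mul_left_cancel₀ hCne hs
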